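/- Let P be a set of 4 points: the three vertices of an equilateral triangle of circumradius 1 together with the circumcenter. Then the Euclidean MST of P has weight 3, while every spanning tree of P whose angular span at each vertex is at most π has weight at least 2 + √3; hence the ratio wt(π-MST)/wt(MST) is at least (2+√3)/3. -/

import Mathlib

open Real

noncomputable section

abbrev Pl := EuclideanSpace ℝ (Fin 2)

def pt (x y : ℝ) : Pl := (EuclideanSpace.equiv (Fin 2) ℝ).symm ![x, y]

def dir (θ : ℝ) : Pl := pt (Real.cos θ) (Real.sin θ)

/-- Wedge with apex `p`, bisector orientation `θ`, angular width `α`. -/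
def wedge (p : Pl) (θ α : ℝ) : Set Pl :=
  {q | q = p ∨ InnerProductGeometry.angle (q - p) (dir θ) ≤ α / 2}

end

open scoped Classical in
/-- Total Euclidean edge weight of a geometric graph. -/
noncomputable def wt {V : Type*} [Fintype V] (G : SimpleGraph V) (pos : V → Pl) : ℝ :=
  (∑ p : V, ∑ q : V, if G.Adj p q then dist (pos p) (pos q) else 0) / 2

/-! ### Auxiliary lemmas -/

lemma dist_pt' (a b c d : ℝ) : dist (pt a b) (pt c d) = Real.sqrt ((a-c)^2+(b-d)^2) := by
  simp [pt, EuclideanSpace.dist_eq, Fin.sum_univ_two, Real.dist_eq, sq_abs]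

lemma inner_pt' (a b c d : ℝ) : (inner ℝ (pt a b) (pt c d) : ℝ) = a*c + b*d := by
  simp [pt, PiLp.inner_apply, Fin.sum_univ_two, RCLike.inner_apply]; ring

lemma sub_pt' (a b c d : ℝ) : pt a b - pt c d = pt (a-c) (b-d) := by
  ext i; fin_cases i <;> simp [pt]

lemma pt_zero' : pt 0 0 = (0 : Pl) := by
  ext i; fin_cases i <;> simp [pt]

lemma norm_pt' (a b : ℝ) : ‖pt a b‖ = Real.sqrt (a^2+b^2) := by
  rw [← dist_zero_right, ← pt_zero', dist_pt']; norm_num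

lemma inner_nonneg_of_angle' {a b : ℝ} (θ : ℝ) (hab : a^2 + b^2 = 1)
    (h : InnerProductGeometry.angle (pt a b) (dir θ) ≤ π/2) :
    0 ≤ a * Real.cos θ + b * Real.sin θ := by
  rw [InnerProductGeometry.angle] at h
  have hn1 : ‖pt a b‖ = 1 := by rw [norm_pt', hab]; exact Real.sqrt_one
  have hn2 : ‖dir θ‖ = 1 := by
    rw [dir, norm_pt', Real.cos_sq_add_sin_sq]; exact Real.sqrt_one
  rw [hn1, hn2] at h
  have := Real.arccos_le_pi_div_two.mp h
  rw [dir, inner_pt'] at this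
  simpa using this

lemma no_wedge' (θ : ℝ) :
    ¬(InnerProductGeometry.angle (pt 1 0) (dir θ) ≤ π/2 ∧
      InnerProductGeometry.angle (pt (-(1/2)) (Real.sqrt 3/2)) (dir θ) ≤ π/2 ∧
      InnerProductGeometry.angle (pt (-(1/2)) (-(Real.sqrt 3/2))) (dir θ) ≤ π/2) := by
  rintro ⟨ha, hb, hc⟩
  have s3 : Real.sqrt 3 ^ 2 = 3 := Real.sq_sqrt (by norm_num)
  have hs3 : (0:ℝ) < Real.sqrt 3 := Real.sqrt_pos.mpr (by norm_num)
  have h1 := inner_nonneg_of_angle' θ (by norm_num) ha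
  have h2 := inner_nonneg_of_angle' θ (by linear_combination s3/4) hb
  have h3 := inner_nonneg_of_angle' θ (by linear_combination s3/4) hc
  have hpy := Real.sin_sq_add_cos_sq θ
  have hcos : Real.cos θ = 0 := by linarith
  rw [hcos] at h2 h3
  have hsin : Real.sin θ = 0 := by
    rcases mul_eq_zero.mp (le_antisymm (by linarith) (by linarith) :
        Real.sqrt 3 / 2 * Real.sin θ = 0) with h | h
    · exfalso; nlinarith
    · exact h
  rw [hcos, hsin] at hpy; norm_num at hpy

/-- The star graph on `Fin 4` centered at `0`. -/
def star4 : SimpleGraph (Fin 4) where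
  Adj p q := p ≠ q ∧ (p = 0 ∨ q = 0)
  symm := by constructor; intro p q h; exact ⟨h.1.symm, h.2.symm⟩
  loopless := by constructor; intro p h; exact h.1 rfl

instance : DecidableRel star4.Adj := fun p q =>
  inferInstanceAs (Decidable (p ≠ q ∧ (p = 0 ∨ q = 0)))

lemma not_reachable_of_isolated' {G : SimpleGraph (Fin 4)} {i j : Fin 4} (hne : i ≠ j)
    (h : ∀ q, ¬G.Adj i q) : ¬G.Reachable i j := by
  rintro ⟨w⟩
  cases w with
  | nil => exact hne rfl
  | cons ha _ => exact h _ ha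

lemma star4_connected : star4.Connected := by
  rw [SimpleGraph.connected_iff]
  refine ⟨fun u v => ?_, ⟨0⟩⟩
  have key : ∀ x : Fin 4, star4.Reachable 0 x := by
    intro x
    by_cases hx : x = 0
    · rw [hx]
    · exact SimpleGraph.Adj.reachable ⟨fun h => hx h.symm, Or.inl rfl⟩
  exact (key u).symm.trans (key v)

lemma star4_iso : ∀ i : Fin 4, i ≠ 0 → ∀ q,
    ¬(star4 \ SimpleGraph.fromEdgeSet {s(0,i)}).Adj i q := by
  intro i hi q hq
  rw [SimpleGraph.sdiff_adj, SimpleGraph.fromEdgeSet_adj] at hq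
  obtain ⟨⟨hne, hor⟩, hq3⟩ := hq
  have hq0 : q = 0 := hor.resolve_left hi
  subst hq0
  exact hq3 ⟨by rw [Set.mem_singleton_iff, Sym2.eq_iff]; tauto, hne⟩

lemma star4_isTree : star4.IsTree := by
  constructor
  · exact star4_connected
  · rw [SimpleGraph.isAcyclic_iff_forall_adj_isBridge]
    intro v w hvw
    obtain ⟨hne, h0 | h0⟩ := hvw
    · subst h0
      intro hr
      exact not_reachable_of_isolated' (Ne.symm hne) (star4_iso w (Ne.symm hne)) hr.symm
    · subst h0
      rw [show s(v, (0:Fin 4)) = s(0, v) from Sym2.eq_swap]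
      exact fun hr => not_reachable_of_isolated' hne (star4_iso v hne) hr.symm

section main
variable (pts : Fin 4 → Pl)
    (h0 : pts 0 = pt 0 0)
    (h1 : pts 1 = pt 1 0)
    (h2 : pts 2 = pt (-(1 / 2)) (Real.sqrt 3 / 2))
    (h3 : pts 3 = pt (-(1 / 2)) (-(Real.sqrt 3 / 2)))
include h0 h1 h2 h3

lemma dists' : dist (pts 0) (pts 1) = 1 ∧ dist (pts 0) (pts 2) = 1 ∧ dist (pts 0) (pts 3) = 1 ∧
    dist (pts 1) (pts 2) = Real.sqrt 3 ∧ dist (pts 1) (pts 3) = Real.sqrt 3 ∧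
    dist (pts 2) (pts 3) = Real.sqrt 3 := by
  have s3 : Real.sqrt 3 ^ 2 = 3 := Real.sq_sqrt (by norm_num)
  rw [h0, h1, h2, h3]
  refine ⟨?_, ?_, ?_, ?_, ?_, ?_⟩ <;> rw [dist_pt']
  · rw [show ((0:ℝ)-1)^2 + ((0:ℝ)-0)^2 = 1 by ring]; exact Real.sqrt_one
  · rw [show ((0:ℝ)-(-(1/2)))^2 + ((0:ℝ)- Real.sqrt 3/2)^2 = 1 by linear_combination s3/4]
    exact Real.sqrt_one
  · rw [show ((0:ℝ)-(-(1/2)))^2 + ((0:ℝ)- (-(Real.sqrt 3/2)))^2 = 1 by linear_combination s3/4]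
    exact Real.sqrt_one
  · rw [show ((1:ℝ)-(-(1/2)))^2 + ((0:ℝ)- Real.sqrt 3/2)^2 = 3 by linear_combination s3/4]
  · rw [show ((1:ℝ)-(-(1/2)))^2 + ((0:ℝ)- (-(Real.sqrt 3/2)))^2 = 3 by linear_combination s3/4]
  · rw [show ((-(1/2):ℝ)-(-(1/2)))^2 + ((Real.sqrt 3/2)- (-(Real.sqrt 3/2)))^2 = 3 by
      linear_combination s3]

open scoped Classical in
lemma wt_eq' (T : SimpleGraph (Fin 4)) :
    wt T pts = (if T.Adj 0 1 then (1:ℝ) else 0) + (if T.Adj 0 2 then (1:ℝ) else 0)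
      + (if T.Adj 0 3 then (1:ℝ) else 0)
      + Real.sqrt 3 * ((if T.Adj 1 2 then (1:ℝ) else 0) + (if T.Adj 1 3 then (1:ℝ) else 0)
        + (if T.Adj 2 3 then (1:ℝ) else 0)) := by
  classical
  obtain ⟨e01, e02, e03, e12, e13, e23⟩ := dists' pts h0 h1 h2 h3
  unfold wt
  simp only [Fin.sum_univ_four]
  rw [dist_comm (pts 1) (pts 0), dist_comm (pts 2) (pts 0), dist_comm (pts 3) (pts 0),
    dist_comm (pts 2) (pts 1), dist_comm (pts 3) (pts 1), dist_comm (pts 3) (pts 2),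
    e01, e02, e03, e12, e13, e23]
  simp only [show T.Adj 1 0 ↔ T.Adj 0 1 from T.adj_comm _ _,
    show T.Adj 2 0 ↔ T.Adj 0 2 from T.adj_comm _ _,
    show T.Adj 3 0 ↔ T.Adj 0 3 from T.adj_comm _ _,
    show T.Adj 2 1 ↔ T.Adj 1 2 from T.adj_comm _ _,
    show T.Adj 3 1 ↔ T.Adj 1 3 from T.adj_comm _ _,
    show T.Adj 3 2 ↔ T.Adj 2 3 from T.adj_comm _ _,
    SimpleGraph.irrefl, if_false]
  simp only [mul_add, mul_ite, mul_one, mul_zero]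
  ring

end main

open scoped Classical in
lemma sum_ind' (T : SimpleGraph (Fin 4)) (hT : T.IsTree) :
    (if T.Adj 0 1 then (1:ℝ) else 0) + (if T.Adj 0 2 then (1:ℝ) else 0)
      + (if T.Adj 0 3 then (1:ℝ) else 0) + (if T.Adj 1 2 then (1:ℝ) else 0)
      + (if T.Adj 1 3 then (1:ℝ) else 0) + (if T.Adj 2 3 then (1:ℝ) else 0) = 3 := by
  classical
  have hdeg : ∀ p, ∑ q, (if T.Adj p q then (1:ℝ) else 0) = (T.degree p : ℝ) := by
    intro p
    rw [SimpleGraph.degree, SimpleGraph.neighborFinset_eq_filter, Finset.sum_boole]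
  have hcard : T.edgeFinset.card = 3 := by
    have := hT.card_edgeFinset
    rw [Fintype.card_fin] at this; omega
  have h6 : ∑ p : Fin 4, ∑ q : Fin 4, (if T.Adj p q then (1:ℝ) else 0) = 6 := by
    simp only [hdeg]
    rw [← Nat.cast_sum]
    rw [SimpleGraph.sum_degrees_eq_twice_card_edges, hcard]
    norm_num
  simp only [Fin.sum_univ_four,
    show T.Adj 1 0 ↔ T.Adj 0 1 from T.adj_comm _ _,
    show T.Adj 2 0 ↔ T.Adj 0 2 from T.adj_comm _ _,
    show T.Adj 3 0 ↔ T.Adj 0 3 from T.adj_comm _ _,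
    show T.Adj 2 1 ↔ T.Adj 1 2 from T.adj_comm _ _,
    show T.Adj 3 1 ↔ T.Adj 1 3 from T.adj_comm _ _,
    show T.Adj 3 2 ↔ T.Adj 2 3 from T.adj_comm _ _,
    SimpleGraph.irrefl, if_false] at h6
  linarith

lemma exists_adj' {T : SimpleGraph (Fin 4)} (h : T.Connected) {i : Fin 4} (hi : i ≠ 0) :
    ∃ q, T.Adj i q := by
  obtain ⟨w⟩ := h.preconnected i 0
  cases w with
  | nil => exact absurd rfl hi
  | cons ha _ => exact ⟨_, ha⟩

/-- For the three vertices of an equilateral triangle of circumradius 1 together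
with the circumcenter, the Euclidean MST has weight 3, while every spanning tree
whose angular span at each vertex is at most π has weight at least `2 + √3`. -/
theorem stmt8 (pts : Fin 4 → Pl)
    (h0 : pts 0 = pt 0 0)
    (h1 : pts 1 = pt 1 0)
    (h2 : pts 2 = pt (-(1 / 2)) (Real.sqrt 3 / 2))
    (h3 : pts 3 = pt (-(1 / 2)) (-(Real.sqrt 3 / 2))) :
    (∀ T : SimpleGraph (Fin 4), T.IsTree → wt T pts ≥ 3) ∧
    (∃ T : SimpleGraph (Fin 4), T.IsTree ∧ wt T pts = 3) ∧
    (∀ T : SimpleGraph (Fin 4), T.IsTree →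
      (∀ p : Fin 4, ∃ θ : ℝ, ∀ q : Fin 4, T.Adj p q → pts q ∈ wedge (pts p) θ π) →
      wt T pts ≥ 2 + Real.sqrt 3) := by
  classical
  have hs3 : (1:ℝ) ≤ Real.sqrt 3 := by
    nlinarith [Real.sq_sqrt (show (0:ℝ) ≤ 3 by norm_num), Real.sqrt_nonneg 3]
  have hbounds : ∀ (c : Prop) (inst : Decidable c), (0:ℝ) ≤ (if c then (1:ℝ) else 0)
      ∧ (if c then (1:ℝ) else 0) ≤ 1 := by
    intro c inst; split <;> norm_num
  refine ⟨?_, ?_, ?_⟩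
  · -- every tree has weight ≥ 3
    intro T hT
    rw [wt_eq' pts h0 h1 h2 h3 T]
    have hsum := sum_ind' T hT
    obtain ⟨b1, _⟩ := hbounds (T.Adj 1 2) _
    obtain ⟨b2, _⟩ := hbounds (T.Adj 1 3) _
    obtain ⟨b3, _⟩ := hbounds (T.Adj 2 3) _
    nlinarith
  · -- the star has weight 3
    refine ⟨star4, star4_isTree, ?_⟩
    rw [wt_eq' pts h0 h1 h2 h3 star4]
    rw [if_pos (show star4.Adj 0 1 by decide), if_pos (show star4.Adj 0 2 by decide),
      if_pos (show star4.Adj 0 3 by decide), if_neg (show ¬ star4.Adj 1 2 by decide),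
      if_neg (show ¬ star4.Adj 1 3 by decide), if_neg (show ¬ star4.Adj 2 3 by decide)]
    ring
  · -- π-trees have weight ≥ 2 + √3
    intro T hT hw
    have hsum := sum_ind' T hT
    rw [wt_eq' pts h0 h1 h2 h3 T]
    obtain ⟨a1, a1'⟩ := hbounds (T.Adj 0 1) _
    obtain ⟨a2, a2'⟩ := hbounds (T.Adj 0 2) _
    obtain ⟨a3, a3'⟩ := hbounds (T.Adj 0 3) _
    obtain ⟨b1, b1'⟩ := hbounds (T.Adj 1 2) _
    obtain ⟨b2, b2'⟩ := hbounds (T.Adj 1 3) _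
    obtain ⟨b3, b3'⟩ := hbounds (T.Adj 2 3) _
    -- at least one outer edge exists
    have houter : (if T.Adj 1 2 then (1:ℝ) else 0) + (if T.Adj 1 3 then (1:ℝ) else 0)
        + (if T.Adj 2 3 then (1:ℝ) else 0) ≥ 1 := by
      by_cases h12 : T.Adj 1 2
      · rw [if_pos h12]; linarith
      by_cases h13 : T.Adj 1 3
      · rw [if_pos h13]; linarith
      by_cases h23 : T.Adj 2 3
      · rw [if_pos h23]; linarith
      -- no outer edges: T is the star, contradiction with the angle condition
      exfalso
      have hstar : ∀ i : Fin 4, i ≠ 0 → T.Adj 0 i := by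
        intro i hi
        obtain ⟨q, hq⟩ := exists_adj' hT.isConnected hi
        fin_cases i <;> fin_cases q <;>
          first
            | exact absurd rfl hi
            | exact absurd hq (T.irrefl)
            | exact hq.symm
            | exact absurd hq h12
            | exact absurd hq h13
            | exact absurd hq h23
            | exact absurd hq.symm h12
            | exact absurd hq.symm h13
            | exact absurd hq.symm h23
      obtain ⟨θ, hθ⟩ := hw 0
      obtain ⟨e01, e02, e03, -⟩ := dists' pts h0 h1 h2 h3
      have hne1 : pts 1 ≠ pts 0 := fun hei => by rw [hei, dist_self] at e01; norm_num at e01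
      have hne2 : pts 2 ≠ pts 0 := fun hei => by rw [hei, dist_self] at e02; norm_num at e02
      have hne3 : pts 3 ≠ pts 0 := fun hei => by rw [hei, dist_self] at e03; norm_num at e03
      have key : ∀ i : Fin 4, T.Adj 0 i → pts i ≠ pts 0 →
          InnerProductGeometry.angle (pts i - pts 0) (dir θ) ≤ π / 2 := by
        intro i hadj hne'
        have := hθ i hadj
        rw [wedge, Set.mem_setOf_eq] at this
        rcases this with h | h
        · exact absurd h hne'
        · exact h
      have k1 := key 1 (hstar 1 (by decide)) hne1
      have k2 := key 2 (hstar 2 (by decide)) hne2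
      have k3 := key 3 (hstar 3 (by decide)) hne3
      rw [h1, h0, sub_pt', show ((1:ℝ)-0) = 1 by norm_num, show ((0:ℝ)-0) = 0 by norm_num] at k1
      rw [h2, h0, sub_pt', show (-(1/2:ℝ)-0) = -(1/2) by norm_num,
        show ((Real.sqrt 3/2)-0) = Real.sqrt 3/2 by norm_num] at k2
      rw [h3, h0, sub_pt', show (-(1/2:ℝ)-0) = -(1/2) by norm_num,
        show ((-(Real.sqrt 3/2))-0) = -(Real.sqrt 3/2) by norm_num] at k3
      exact no_wedge' θ ⟨k1, k2, k3⟩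
    nlinarith
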